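/- Let m ≥ 1 and suppose μ, ν > 0 satisfy μ² = (2μ⁴ + 4m·μ⁴ν⁴)/(4 - 2μ² + 4m·ν⁴) and ν² = (4 - 2μ² + 4m·ν⁴)/((4m+8) - 2μ²ν² - 4ν²), with μ² ≤ 1 and ν² ≤ 1. Then (μ², ν²) = (1, 1) or (μ², ν²) = (1, 1/(2m+3)). -/
import Mathlib


/-- Solutions of the algebraic limit equations for `(μ², ν²)` when `μ ≠ 0`. -/
theorem stmt_8 (m : ℕ) (hm : 1 ≤ m) (μ ν : ℝ) (hμ : 0 < μ) (hν : 0 < ν)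
    (hμ1 : μ^2 ≤ 1) (hν1 : ν^2 ≤ 1)
    (h1 : μ^2 = (2 * μ^4 + 4 * m * μ^4 * ν^4) / (4 - 2 * μ^2 + 4 * m * ν^4))
    (h2 : ν^2 = (4 - 2 * μ^2 + 4 * m * ν^4) /
        ((4 * m + 8) - 2 * μ^2 * ν^2 - 4 * ν^2)) :
    (μ^2 = 1 ∧ ν^2 = 1) ∨ (μ^2 = 1 ∧ ν^2 = 1 / (2 * (m : ℝ) + 3)) := by
  have hμ2 : 0 < μ^2 := by positivity
  have hν2 : 0 < ν^2 := by positivity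
  have hmν : (0:ℝ) ≤ (m:ℝ) * ν^4 := by positivity
  have hm1 : (1:ℝ) ≤ (m:ℝ) := by exact_mod_cast hm
  have hDpos : 0 < 4 - 2 * μ^2 + 4 * (m:ℝ) * ν^4 := by nlinarith
  rw [eq_div_iff hDpos.ne'] at h1
  have key1 : μ^2 * (1 - μ^2) * (1 + (m:ℝ) * ν^4) = 0 := by linear_combination h1 / 4
  have hx : μ^2 = 1 := by
    rcases mul_eq_zero.1 key1 with h | h
    · rcases mul_eq_zero.1 h with h' | h'
      · exact absurd h' hμ2.ne'
      · linarith
    · nlinarith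
  have hEpos : 0 < (4 * (m:ℝ) + 8) - 2 * μ^2 * ν^2 - 4 * ν^2 := by
    rw [hx]; nlinarith
  rw [eq_div_iff hEpos.ne'] at h2
  rw [hx] at h2
  have key2 : (ν^2 - 1) * ((4 * (m:ℝ) + 6) * ν^2 - 2) = 0 := by
    linear_combination (-1 : ℝ) * h2
  rcases mul_eq_zero.1 key2 with h | h
  · left; constructor
    · exact hx
    · linarith
  · right; refine ⟨hx, ?_⟩
    have hden : (2 * (m:ℝ) + 3) ≠ 0 := by positivity
    field_simp
    linarith
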